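/- For every positive integer n and every finite set S ⊆ [0,n]² with at most n points, the length of the minimum spanning tree of S is at most 2n√n. -/

import Mathlib

set_option maxHeartbeats 1000000


/-- Points of the Euclidean plane. -/
abbrev Pt := EuclideanSpace ℝ (Fin 2)

open Classical in
/-- Total edge weight of a graph `G` on the points of `S`, w.r.t. the distance function `d`
(each unordered edge counted once). -/
noncomputable def treeWeight {V : Type*} (d : V → V → ℝ) (S : Finset V)
    (G : SimpleGraph {x // x ∈ S}) : ℝ :=
  (1 / 2) * ∑ x : {x // x ∈ S}, ∑ y : {y // y ∈ S},
    if G.Adj x y then d x.1 y.1 else 0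

/-- Length of a minimum spanning tree of the finite set `S`, w.r.t. distance `d`:
the infimum, over all spanning trees of the complete graph on `S` with edge weights given
by `d`, of the total edge weight.  It is `0` if `S` has at most one point. -/
noncomputable def mstLengthF {V : Type*} (d : V → V → ℝ) (S : Finset V) : ℝ :=
  sInf {L : ℝ | ∃ G : SimpleGraph {x // x ∈ S}, G.IsTree ∧ L = treeWeight d S G}

open Classical in
/-- MST length for a set (`0` junk value for infinite sets). -/
noncomputable def mstLength {V : Type*} (d : V → V → ℝ) (S : Set V) : ℝ :=
  if h : S.Finite then mstLengthF d h.toFinset else 0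

/-- The MST-ratio `μ(A,B) = (|MST(B)| + |MST(A \ B)|) / |MST(A)|`. -/
noncomputable def mstRatio {V : Type*} (d : V → V → ℝ) (A B : Set V) : ℝ :=
  (mstLength d B + mstLength d (A \ B)) / mstLength d A

open SimpleGraph Finset

lemma isAcyclic_of_injective_step {V : Type*} (G : SimpleGraph V) (f : V → ℕ)
    (hf : Function.Injective f)
    (hstep : ∀ {v w : V}, G.Adj v w → f v + 1 = f w ∨ f w + 1 = f v) :
    G.IsAcyclic := by
  rw [isAcyclic_iff_forall_adj_isBridge]
  have key : ∀ {v w : V}, G.Adj v w → f v + 1 = f w →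
      ¬(G \ fromEdgeSet {s(v, w)}).Reachable v w := by
    intro v w hvw hfvw hr
    have walkclaim : ∀ {a b : V} (_ : (G \ fromEdgeSet {s(v, w)}).Walk a b),
        f a ≤ f v → f b ≤ f v := by
      intro a b p
      induction p with
      | nil => exact fun h => h
      | @cons a c b hadj p ih =>
        intro ha
        apply ih
        rw [SimpleGraph.sdiff_adj, SimpleGraph.fromEdgeSet_adj] at hadj
        obtain ⟨hG, hne⟩ := hadj
        rcases hstep hG with h1 | h1
        · rcases Nat.lt_or_ge (f a) (f v) with h2 | h2
          · omega
          · have hav : a = v := hf (by omega)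
            have hcw : c = w := hf (by omega)
            exfalso; exact hne ⟨by rw [hav, hcw]; exact Set.mem_singleton _, hG.ne⟩
        · omega
    obtain ⟨p⟩ := hr
    have := walkclaim p le_rfl
    omega
  intro v w hvw
  rcases hstep hvw with h | h
  · exact key hvw h
  · refine fun hr => key hvw.symm h ?_
    rw [show s(w, v) = s(v, w) from Sym2.eq_swap]
    exact hr.symm


def pathG {α : Type*} (idx : α → ℕ) : SimpleGraph α where
  Adj a b := idx a + 1 = idx b ∨ idx b + 1 = idx a
  symm := ⟨fun a b h => h.symm⟩
  loopless := ⟨fun a h => by omega⟩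

lemma pathG_adj {α : Type*} (idx : α → ℕ) (a b : α) :
    (pathG idx).Adj a b ↔ (idx a + 1 = idx b ∨ idx b + 1 = idx a) := Iff.rfl

lemma mst_le_of_key (S : Finset Pt) (hS : S.Nonempty) (w κ : Pt → ℝ) (w₀ R : ℝ)
    (hw : ∀ p ∈ S, w₀ ≤ w p)
    (hR : ∀ p ∈ S, ∀ q ∈ S, |κ p - κ q| ≤ R)
    (hd : ∀ p ∈ S, ∀ q ∈ S, dist p q ≤ w p + w q + |κ p - κ q|) :
    mstLengthF dist S ≤ 2 * (∑ p ∈ S, w p) - 2 * w₀ + R := by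
  classical
  set l : List Pt := S.toList.mergeSort (fun a b => decide (κ a ≤ κ b)) with hl
  have hperm : l.Perm S.toList := List.mergeSort_perm _ _
  have hlen : l.length = S.card := by rw [hperm.length_eq, Finset.length_toList]
  have hnd : l.Nodup := hperm.nodup_iff.mpr S.nodup_toList
  have hmem : ∀ x ∈ l, x ∈ S := fun x hx => Finset.mem_toList.mp (hperm.mem_iff.mp hx)
  have hsorted : l.Pairwise (fun a b => κ a ≤ κ b) := by
    have h := List.pairwise_mergeSort (le := fun a b : Pt => decide (κ a ≤ κ b))
      (fun a b c h1 h2 => by simp at h1 h2 ⊢; linarith)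
      (fun a b => by simp [le_total]) S.toList
    rw [← hl] at h
    exact h.imp (by simp)
  set k := l.length with hk
  have hkcard : k = S.card := hlen
  have hkpos : 0 < k := by rw [hkcard]; exact Finset.card_pos.mpr hS
  set P : ℕ → Pt := fun i => l.getD i 0 with hP
  have hPget : ∀ (i : ℕ) (h : i < k), P i = l.get ⟨i, h⟩ := fun i h => List.getD_eq_getElem _ _ h
  have hPmem : ∀ i, i < k → P i ∈ S := by
    intro i h; rw [hPget i h]; exact hmem _ (List.get_mem _ _)
  have hPsorted : ∀ i j, i < j → j < k → κ (P i) ≤ κ (P j) := by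
    intro i j hij hj
    rw [hPget i (lt_trans hij hj), hPget j hj]
    exact List.pairwise_iff_get.mp hsorted ⟨i, lt_trans hij hj⟩ ⟨j, hj⟩ hij
  have hcard : Fintype.card {x // x ∈ S} = k := by rw [Fintype.card_coe, hkcard]
  set g : Fin k → {x // x ∈ S} := fun i => ⟨l.get i, hmem _ (List.get_mem _ _)⟩ with hg
  have hgbij : Function.Bijective g := by
    rw [Fintype.bijective_iff_injective_and_card]
    constructor
    · intro i j hij
      apply List.nodup_iff_injective_get.mp hnd
      simpa [hg, Subtype.ext_iff] using hij
    · simp [hcard]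
  set e : Fin k ≃ {x // x ∈ S} := Equiv.ofBijective g hgbij with he
  have heval : ∀ i : Fin k, (e i : Pt) = P (i : ℕ) := by
    intro i
    rw [hPget i i.isLt]
    rfl
  set G : SimpleGraph {x // x ∈ S} := pathG (fun a => ((e.symm a : Fin k) : ℕ)) with hG
  have hadj_e : ∀ (i j : Fin k), G.Adj (e i) (e j) ↔ ((i:ℕ)+1 = (j:ℕ) ∨ (j:ℕ)+1 = (i:ℕ)) := by
    intro i j; simp [hG, pathG_adj, Equiv.symm_apply_apply]
  have hconn : G.Connected := by
    have hne : Nonempty {x // x ∈ S} := ⟨⟨hS.choose, hS.choose_spec⟩⟩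
    rw [connected_iff]
    refine ⟨?_, hne⟩
    have reach0 : ∀ (i : ℕ) (h : i < k), G.Reachable (e ⟨0, hkpos⟩) (e ⟨i, h⟩) := by
      intro i
      induction i with
      | zero => intro h; exact Reachable.refl _
      | succ i ih =>
        intro h
        have hi : i < k := Nat.lt_of_succ_lt h
        exact (ih hi).trans (SimpleGraph.Adj.reachable
          ((hadj_e ⟨i, hi⟩ ⟨i+1, h⟩).mpr (Or.inl rfl)))
    intro a b
    have ha := reach0 ((e.symm a) : ℕ) (e.symm a).isLt
    have hb := reach0 ((e.symm b) : ℕ) (e.symm b).isLt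
    simp only [Fin.eta, Equiv.apply_symm_apply] at ha hb
    exact ha.symm.trans hb
  have hacyc : G.IsAcyclic := by
    apply isAcyclic_of_injective_step G (fun a => ((e.symm a : Fin k) : ℕ))
    · intro a b hab
      exact e.symm.injective (Fin.val_injective hab)
    · intro v w h; exact h
  have htree : G.IsTree := ⟨hconn, hacyc⟩
  set W : ℝ := ∑ i ∈ Finset.range (k-1), dist (P i) (P (i+1)) with hW
  have htw : treeWeight dist S G = W := by
    have h0 : treeWeight dist S G = (1 / 2) * ∑ x : {x // x ∈ S}, ∑ y : {y // y ∈ S},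
        (if G.Adj x y then dist x.1 y.1 else 0) := by
      rw [treeWeight]
    rw [h0]
    have step1 : ∑ x : {x // x ∈ S}, ∑ y : {y // y ∈ S}, (if G.Adj x y then dist x.1 y.1 else 0)
        = ∑ i : Fin k, ∑ j : Fin k, (if G.Adj (e i) (e j) then dist (P (i:ℕ)) (P (j:ℕ)) else 0) := by
      rw [← Equiv.sum_comp e (fun x => ∑ y : {y // y ∈ S}, (if G.Adj x y then dist x.1 y.1 else 0))]
      apply Finset.sum_congr rfl; intro i _
      rw [← Equiv.sum_comp e (fun y => if G.Adj (e i) y then dist (e i).1 y.1 else 0)]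
      apply Finset.sum_congr rfl; intro j _
      rw [heval i, heval j]
    rw [step1]
    have step2 : ∀ i j : Fin k, (if G.Adj (e i) (e j) then dist (P (i:ℕ)) (P (j:ℕ)) else 0)
        = (if (i:ℕ)+1 = (j:ℕ) then dist (P (i:ℕ)) (P (j:ℕ)) else 0)
          + (if (j:ℕ)+1 = (i:ℕ) then dist (P (i:ℕ)) (P (j:ℕ)) else 0) := by
      intro i j
      by_cases h1 : (i:ℕ)+1 = (j:ℕ) <;> by_cases h2 : (j:ℕ)+1 = (i:ℕ)
      · omega
      · rw [if_pos ((hadj_e i j).mpr (Or.inl h1)), if_pos h1, if_neg h2, add_zero]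
      · rw [if_pos ((hadj_e i j).mpr (Or.inr h2)), if_neg h1, if_pos h2, zero_add]
      · rw [if_neg, if_neg h1, if_neg h2, add_zero]
        rw [hadj_e]; rintro (h | h) <;> omega
    have step3 : ∑ i : Fin k, ∑ j : Fin k, (if G.Adj (e i) (e j) then dist (P (i:ℕ)) (P (j:ℕ)) else 0)
        = 2 * ∑ i : Fin k, ∑ j : Fin k, (if (i:ℕ)+1 = (j:ℕ) then dist (P (i:ℕ)) (P (j:ℕ)) else 0) := by
      calc ∑ i : Fin k, ∑ j : Fin k, (if G.Adj (e i) (e j) then dist (P (i:ℕ)) (P (j:ℕ)) else 0)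
          = ∑ i : Fin k, ∑ j : Fin k,
            ((if (i:ℕ)+1 = (j:ℕ) then dist (P (i:ℕ)) (P (j:ℕ)) else 0)
             + (if (j:ℕ)+1 = (i:ℕ) then dist (P (i:ℕ)) (P (j:ℕ)) else 0)) := by
            apply Finset.sum_congr rfl; intro i _
            apply Finset.sum_congr rfl; intro j _
            exact step2 i j
        _ = (∑ i : Fin k, ∑ j : Fin k, (if (i:ℕ)+1 = (j:ℕ) then dist (P (i:ℕ)) (P (j:ℕ)) else 0))
            + ∑ i : Fin k, ∑ j : Fin k, (if (j:ℕ)+1 = (i:ℕ) then dist (P (i:ℕ)) (P (j:ℕ)) else 0) := by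
            rw [← Finset.sum_add_distrib]
            apply Finset.sum_congr rfl; intro i _
            rw [← Finset.sum_add_distrib]
        _ = 2 * ∑ i : Fin k, ∑ j : Fin k, (if (i:ℕ)+1 = (j:ℕ) then dist (P (i:ℕ)) (P (j:ℕ)) else 0) := by
            have : ∑ i : Fin k, ∑ j : Fin k, (if (j:ℕ)+1 = (i:ℕ) then dist (P (i:ℕ)) (P (j:ℕ)) else 0)
                = ∑ i : Fin k, ∑ j : Fin k, (if (i:ℕ)+1 = (j:ℕ) then dist (P (i:ℕ)) (P (j:ℕ)) else 0) := by
              rw [Finset.sum_comm]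
              apply Finset.sum_congr rfl; intro i _
              apply Finset.sum_congr rfl; intro j _
              rw [_root_.dist_comm]
            rw [this]; ring
    have step45 : ∑ i : Fin k, ∑ j : Fin k, (if (i:ℕ)+1 = (j:ℕ) then dist (P (i:ℕ)) (P (j:ℕ)) else 0) = W := by
      have step4 : ∀ i : Fin k, (∑ j : Fin k, if (i:ℕ)+1 = (j:ℕ) then dist (P (i:ℕ)) (P (j:ℕ)) else 0)
          = if (i:ℕ)+1 < k then dist (P (i:ℕ)) (P ((i:ℕ)+1)) else 0 := by
        intro i
        by_cases h : (i:ℕ)+1 < k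
        · rw [if_pos h]
          rw [Finset.sum_eq_single (⟨(i:ℕ)+1, h⟩ : Fin k)]
          · rw [if_pos rfl]
          · intro j _ hj
            rw [if_neg]
            intro hc
            exact hj (Fin.ext hc.symm)
          · intro hn; exact absurd (Finset.mem_univ _) hn
        · rw [if_neg h]
          apply Finset.sum_eq_zero
          intro j _
          rw [if_neg]
          intro hc
          exact h (hc ▸ j.isLt)
      calc ∑ i : Fin k, ∑ j : Fin k, (if (i:ℕ)+1 = (j:ℕ) then dist (P (i:ℕ)) (P (j:ℕ)) else 0)
          = ∑ i : Fin k, (if (i:ℕ)+1 < k then dist (P (i:ℕ)) (P ((i:ℕ)+1)) else 0) :=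
            Finset.sum_congr rfl fun i _ => step4 i
        _ = ∑ i ∈ Finset.range k, (if i+1 < k then dist (P i) (P (i+1)) else 0) :=
            Fin.sum_univ_eq_sum_range (fun i => if i+1 < k then dist (P i) (P (i+1)) else 0) k
        _ = W := by
            rw [hW]
            rw [← Finset.sum_subset (Finset.range_subset_range.mpr (Nat.sub_le k 1))
              (fun x hx hnx => by
                rw [if_neg]
                simp only [Finset.mem_range] at hx hnx
                omega)]
            apply Finset.sum_congr rfl
            intro i hi
            simp only [Finset.mem_range] at hi
            rw [if_pos (by omega)]
    rw [step3, step45]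
    ring
  have hmemset : treeWeight dist S G ∈
      {L : ℝ | ∃ G' : SimpleGraph {x // x ∈ S}, G'.IsTree ∧ L = treeWeight dist S G'} :=
    ⟨G, htree, rfl⟩
  have hbdd : BddBelow {L : ℝ | ∃ G' : SimpleGraph {x // x ∈ S}, G'.IsTree ∧ L = treeWeight dist S G'} := by
    refine ⟨0, ?_⟩
    rintro L ⟨G', _, rfl⟩
    rw [treeWeight]
    apply mul_nonneg (by norm_num)
    apply Finset.sum_nonneg; intro x _
    apply Finset.sum_nonneg; intro y _
    split
    · exact dist_nonneg
    · exact le_refl 0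
  have hstep1 : mstLengthF dist S ≤ W := by
    rw [mstLengthF, ← htw]
    exact csInf_le hbdd hmemset
  have hsumS : ∑ i ∈ Finset.range k, w (P i) = ∑ p ∈ S, w p := by
    calc ∑ i ∈ Finset.range k, w (P i)
        = ∑ i : Fin k, w (P (i : ℕ)) := (Fin.sum_univ_eq_sum_range (fun i => w (P i)) k).symm
      _ = ∑ a : {x // x ∈ S}, w a.1 := by
          rw [← Equiv.sum_comp e (fun a => w a.1)]
          exact Finset.sum_congr rfl fun i _ => by rw [heval]
      _ = ∑ p ∈ S, w p := Finset.sum_coe_sort S w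
  have hk1 : k - 1 + 1 = k := Nat.succ_pred_eq_of_pos hkpos
  have hdrop_last : ∑ i ∈ Finset.range (k-1), w (P i) = (∑ p ∈ S, w p) - w (P (k-1)) := by
    rw [← hsumS]
    nth_rewrite 2 [← hk1]
    rw [Finset.sum_range_succ]
    ring
  have hdrop_first : ∑ i ∈ Finset.range (k-1), w (P (i+1)) = (∑ p ∈ S, w p) - w (P 0) := by
    rw [← hsumS]
    nth_rewrite 2 [← hk1]
    rw [Finset.sum_range_succ']
    ring
  have hklt : k - 1 < k := by omega
  have hWle : W ≤ 2 * (∑ p ∈ S, w p) - 2 * w₀ + R := by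
    have hterm : ∀ i ∈ Finset.range (k-1), dist (P i) (P (i+1))
        ≤ w (P i) + w (P (i+1)) + (κ (P (i+1)) - κ (P i)) := by
      intro i hi
      simp only [Finset.mem_range] at hi
      have h1 : i < k := by omega
      have h2 : i + 1 < k := by omega
      have hdd := hd (P i) (hPmem i h1) (P (i+1)) (hPmem _ h2)
      have habs : |κ (P i) - κ (P (i+1))| = κ (P (i+1)) - κ (P i) := by
        rw [abs_sub_comm]
        exact abs_of_nonneg (by linarith [hPsorted i (i+1) (by omega) h2])
      rw [habs] at hdd
      exact hdd
    have hsum := Finset.sum_le_sum hterm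
    rw [hW]
    have hsplit : ∑ i ∈ Finset.range (k-1), (w (P i) + w (P (i+1)) + (κ (P (i+1)) - κ (P i)))
        = (∑ i ∈ Finset.range (k-1), w (P i)) + (∑ i ∈ Finset.range (k-1), w (P (i+1)))
          + (κ (P (k-1)) - κ (P 0)) := by
      rw [Finset.sum_add_distrib, Finset.sum_add_distrib,
        Finset.sum_range_sub (fun i => κ (P i))]
    have hR0 : κ (P (k-1)) - κ (P 0) ≤ R := by
      have h := hR (P (k-1)) (hPmem _ hklt) (P 0) (hPmem 0 hkpos)
      calc κ (P (k-1)) - κ (P 0) ≤ |κ (P (k-1)) - κ (P 0)| := le_abs_self _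
        _ ≤ R := h
    have hw0 : w₀ ≤ w (P 0) := hw _ (hPmem 0 hkpos)
    have hwl : w₀ ≤ w (P (k-1)) := hw _ (hPmem _ hklt)
    rw [hsplit] at hsum
    rw [hdrop_last, hdrop_first] at hsum
    linarith
  linarith [hstep1, hWle]


lemma dist_le_sqrt (p q : Pt) (a b : ℝ) (h0 : |p 0 - q 0| ≤ a) (h1 : |p 1 - q 1| ≤ b) :
    dist p q ≤ Real.sqrt (a^2 + b^2) := by
  have hde : dist p q = Real.sqrt ((p 0 - q 0)^2 + (p 1 - q 1)^2) := by
    rw [EuclideanSpace.dist_eq, Fin.sum_univ_two]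
    norm_num [Real.dist_eq]
  rw [hde]
  apply Real.sqrt_le_sqrt
  have ha := abs_nonneg (p 0 - q 0)
  have hb := abs_nonneg (p 1 - q 1)
  nlinarith [sq_abs (p 0 - q 0), sq_abs (p 1 - q 1)]

lemma dist_le_l1 (p q : Pt) : dist p q ≤ |p 0 - q 0| + |p 1 - q 1| := by
  have h := dist_le_sqrt p q (|p 0 - q 0|) (|p 1 - q 1|) le_rfl le_rfl
  refine h.trans ?_
  have ha := abs_nonneg (p 0 - q 0)
  have hb := abs_nonneg (p 1 - q 1)
  rw [show |p 0 - q 0|^2 + |p 1 - q 1|^2 = (|p 0 - q 0| + |p 1 - q 1|)^2 - 2*(|p 0 - q 0| * |p 1 - q 1|) by ring]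
  calc Real.sqrt ((|p 0 - q 0| + |p 1 - q 1|)^2 - 2*(|p 0 - q 0| * |p 1 - q 1|))
      ≤ Real.sqrt ((|p 0 - q 0| + |p 1 - q 1|)^2) := by
        apply Real.sqrt_le_sqrt; nlinarith [mul_nonneg ha hb]
    _ = |p 0 - q 0| + |p 1 - q 1| := Real.sqrt_sq (by linarith)

/-- The key "snake" step inequality, in pure real-number form (for `jp ≤ jq`). -/
lemma snake_step_aux (N h c xp yp xq yq : ℝ) (jp jq : ℕ)
    (hN : 0 ≤ N) (hh : 0 ≤ h) (hjpq : jp ≤ jq)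
    (hxp0 : 0 ≤ xp) (hxpN : xp ≤ N) (hxq0 : 0 ≤ xq) (hxqN : xq ≤ N) :
    |xp - xq| + |yp - yq| ≤
      |yp - ((jp:ℝ)*h + c)| + |yq - ((jq:ℝ)*h + c)| +
      |((jp:ℝ)*(N+h) + (if Even jp then xp else N - xp))
        - ((jq:ℝ)*(N+h) + (if Even jq then xq else N - xq))| := by
  set tp := (if Even jp then xp else N - xp) with htp
  set tq := (if Even jq then xq else N - xq) with htq
  have htp0 : 0 ≤ tp := by rw [htp]; split <;> linarith
  have htpN : tp ≤ N := by rw [htp]; split <;> linarith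
  have htq0 : 0 ≤ tq := by rw [htq]; split <;> linarith
  have htqN : tq ≤ N := by rw [htq]; split <;> linarith
  have hdev : |yp - yq| ≤ |yp - ((jp:ℝ)*h + c)| + |yq - ((jq:ℝ)*h + c)| + ((jq:ℝ) - (jp:ℝ))*h := by
    have t1 := abs_sub_le yp ((jp:ℝ)*h + c) yq
    have t2 := abs_sub_le ((jp:ℝ)*h + c) ((jq:ℝ)*h + c) yq
    have t3 : |((jp:ℝ)*h + c) - ((jq:ℝ)*h + c)| = ((jq:ℝ) - (jp:ℝ))*h := by
      have hc : (jp:ℝ) ≤ (jq:ℝ) := by exact_mod_cast hjpq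
      rw [show ((jp:ℝ)*h + c) - ((jq:ℝ)*h + c) = -(((jq:ℝ) - (jp:ℝ))*h) by ring, abs_neg,
        abs_of_nonneg (mul_nonneg (by linarith) hh)]
    have t4 : |((jq:ℝ)*h + c) - yq| = |yq - ((jq:ℝ)*h + c)| := abs_sub_comm _ _
    linarith
  rcases Nat.eq_or_lt_of_le hjpq with heq | hlt
  · -- same line
    subst heq
    have habs : |tp - tq| = |xp - xq| := by
      rw [htp, htq]
      split
      · rfl
      · rw [show N - xp - (N - xq) = -(xp - xq) by ring, abs_neg]
    have hκ : |((jp:ℝ)*(N+h) + tp) - ((jp:ℝ)*(N+h) + tq)| = |xp - xq| := by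
      rw [show ((jp:ℝ)*(N+h) + tp) - ((jp:ℝ)*(N+h) + tq) = tp - tq by ring, habs]
    rw [hκ]
    have : ((jp:ℝ) - (jp:ℝ))*h = 0 := by ring
    linarith [hdev]
  · -- jp < jq
    have hj1 : (1:ℝ) ≤ (jq:ℝ) - (jp:ℝ) := by
      have : jp + 1 ≤ jq := hlt
      have := (Nat.cast_le (α := ℝ)).mpr this
      push_cast at this
      linarith
    have hx : |xp - xq| ≤ ((jq:ℝ) - (jp:ℝ))*N + tq - tp := by
      rcases Nat.lt_or_ge jp (jq - 1) with hg2 | hg1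
      · -- gap ≥ 2
        have hj2 : (2:ℝ) ≤ (jq:ℝ) - (jp:ℝ) := by
          have : jp + 2 ≤ jq := by omega
          have := (Nat.cast_le (α := ℝ)).mpr this
          push_cast at this
          linarith
        rw [abs_le]
        constructor <;> nlinarith
      · -- jq = jp + 1
        have hjq : jq = jp + 1 := by omega
        subst hjq
        rcases Nat.even_or_odd jp with hev | hod
        · have h1 : tp = xp := by rw [htp, if_pos hev]
          have h2 : tq = N - xq := by
            rw [htq, if_neg]
            simp [Nat.even_add_one, hev]
          rw [h1, h2]
          rw [abs_le]
          push_cast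
          constructor <;> nlinarith
        · have h1 : tp = N - xp := by
            rw [htp, if_neg]
            simp [Nat.not_even_iff_odd.mpr hod]
          have h2 : tq = xq := by
            rw [htq, if_pos]
            simpa [Nat.even_add_one] using Nat.not_even_iff_odd.mpr hod
          rw [h1, h2]
          rw [abs_le]
          push_cast
          constructor <;> nlinarith
    have hκge : ((jq:ℝ)*(N+h) + tq) - ((jp:ℝ)*(N+h) + tp)
        = ((jq:ℝ) - (jp:ℝ))*(N+h) + tq - tp := by ring
    have hfin : ((jq:ℝ) - (jp:ℝ))*(N+h) + tq - tp ≤ |((jp:ℝ)*(N+h) + tp) - ((jq:ℝ)*(N+h) + tq)| := by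
      rw [abs_sub_comm]
      calc ((jq:ℝ) - (jp:ℝ))*(N+h) + tq - tp
          = ((jq:ℝ)*(N+h) + tq) - ((jp:ℝ)*(N+h) + tp) := by ring
        _ ≤ |((jq:ℝ)*(N+h) + tq) - ((jp:ℝ)*(N+h) + tp)| := le_abs_self _
    have expand : ((jq:ℝ) - (jp:ℝ))*(N+h) = ((jq:ℝ) - (jp:ℝ))*N + ((jq:ℝ) - (jp:ℝ))*h := by ring
    linarith [hdev, hx, hfin]

lemma snake_step (n : ℕ) (h c : ℝ) (hh : 0 ≤ h) (j : Pt → ℕ) (p q : Pt)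
    (hp : ∀ i : Fin 2, p i ∈ Set.Icc (0:ℝ) n) (hq : ∀ i : Fin 2, q i ∈ Set.Icc (0:ℝ) n) :
    dist p q ≤ |p 1 - ((j p:ℝ)*h + c)| + |q 1 - ((j q:ℝ)*h + c)| +
      |((j p:ℝ)*((n:ℝ)+h) + (if Even (j p) then p 0 else (n:ℝ) - p 0))
        - ((j q:ℝ)*((n:ℝ)+h) + (if Even (j q) then q 0 else (n:ℝ) - q 0))| := by
  have hN : (0:ℝ) ≤ n := Nat.cast_nonneg n
  obtain ⟨hp00, hp0N⟩ := hp 0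
  obtain ⟨hq00, hq0N⟩ := hq 0
  have hl1 := dist_le_l1 p q
  rcases le_total (j p) (j q) with hle | hle
  · have := snake_step_aux (n:ℝ) h c (p 0) (p 1) (q 0) (q 1) (j p) (j q)
      hN hh hle hp00 hp0N hq00 hq0N
    linarith
  · have := snake_step_aux (n:ℝ) h c (q 0) (q 1) (p 0) (p 1) (j q) (j p)
      hN hh hle hq00 hq0N hp00 hp0N
    rw [abs_sub_comm (q 0) (p 0), abs_sub_comm (q 1) (p 1),
      abs_sub_comm ((j q:ℝ)*((n:ℝ)+h) + _) ((j p:ℝ)*((n:ℝ)+h) + _)] at this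
    linarith

lemma lineIdx_facts (n m : ℕ) (hm : 1 ≤ m) (hn : 1 ≤ n) (y : ℝ) (h0 : 0 ≤ y) (hyn : y ≤ n) :
    min (m-1) (⌊y/((n:ℝ)/m)⌋).toNat ≤ m - 1 ∧
    ((min (m-1) (⌊y/((n:ℝ)/m)⌋).toNat : ℕ) : ℝ) * ((n:ℝ)/m) ≤ y ∧
    y ≤ (((min (m-1) (⌊y/((n:ℝ)/m)⌋).toNat : ℕ) : ℝ) + 1) * ((n:ℝ)/m) := by
  have hmR : (0:ℝ) < m := by exact_mod_cast hm
  have hnR : (0:ℝ) < n := by exact_mod_cast hn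
  set h := (n:ℝ)/m with hh
  have hh0 : 0 < h := div_pos hnR hmR
  have hmh : (m:ℝ) * h = n := by rw [hh]; field_simp
  set b := ⌊y/h⌋ with hb
  have hb0 : 0 ≤ b := Int.floor_nonneg.mpr (div_nonneg h0 hh0.le)
  have hcast : ((b.toNat : ℕ) : ℝ) = (b : ℝ) := by exact_mod_cast Int.toNat_of_nonneg hb0
  have hfl : (b:ℝ) ≤ y/h := Int.floor_le _
  have hfu : y/h < (b:ℝ) + 1 := Int.lt_floor_add_one _
  have hfl' : (b:ℝ) * h ≤ y := (le_div_iff₀ hh0).mp hfl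
  have hfu' : y < ((b:ℝ)+1) * h := (div_lt_iff₀ hh0).mp hfu
  rcases le_or_gt b.toNat (m-1) with hcase | hcase
  · rw [min_eq_right hcase]
    refine ⟨hcase, ?_, ?_⟩
    · rw [hcast]; exact hfl'
    · rw [hcast]; linarith
  · rw [min_eq_left (le_of_lt hcase)]
    have hbm : (m:ℝ) ≤ (b:ℝ) := by
      have : m ≤ b.toNat := by omega
      have := (Nat.cast_le (α := ℝ)).mpr this
      rw [hcast] at this
      exact this
    have hyn' : (n:ℝ) ≤ y := by nlinarith
    have hcm : ((m - 1 : ℕ) : ℝ) = (m:ℝ) - 1 := by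
      have : (1:ℕ) ≤ m := hm
      push_cast [Nat.cast_sub this]
      ring
    refine ⟨le_rfl, ?_, ?_⟩
    · rw [hcm]; nlinarith
    · rw [hcm]; nlinarith

lemma snake_bound (n m : ℕ) (hm : 1 ≤ m) (hn : 1 ≤ n) (S : Finset Pt) (hS : S.Nonempty)
    (hcard : S.card ≤ n)
    (hsq : ∀ p ∈ S, ∀ i : Fin 2, p i ∈ Set.Icc (0:ℝ) n) :
    mstLengthF dist S ≤ (n:ℝ)*((n:ℝ)/m)/2 + ((2*(m:ℝ)-1)*((n:ℝ) + (n:ℝ)/m) + 2*(n:ℝ))/2 := by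
  have hmR : (0:ℝ) < m := by exact_mod_cast hm
  have hnR : (0:ℝ) < n := by exact_mod_cast hn
  set h := (n:ℝ)/m with hhdef
  have hh0 : 0 < h := div_pos hnR hmR
  set jA : Pt → ℕ := fun p => min (m-1) (⌊p 1 / h⌋).toNat with hjA
  set devA : Pt → ℝ := fun p => |p 1 - ((jA p:ℝ)*h + h/2)| with hdevA
  set κA : Pt → ℝ := fun p => (jA p:ℝ)*((n:ℝ)+h) + (if Even (jA p) then p 0 else (n:ℝ) - p 0) with hκA
  set jB : Pt → ℕ := fun p => if ((jA p:ℝ)*h + h/2) ≤ p 1 then jA p + 1 else jA p with hjB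
  set devB : Pt → ℝ := fun p => |p 1 - ((jB p:ℝ)*h + 0)| with hdevB
  set κB : Pt → ℝ := fun p => (jB p:ℝ)*((n:ℝ)+h) + (if Even (jB p) then p 0 else (n:ℝ) - p 0) with hκB
  have hmc : ((m - 1 : ℕ) : ℝ) = (m:ℝ) - 1 := by
    push_cast [Nat.cast_sub hm]; ring
  -- facts about jA, jB for points in the square
  have hfacts : ∀ p ∈ S, jA p ≤ m - 1 ∧ (jA p : ℝ) * h ≤ p 1 ∧ p 1 ≤ ((jA p : ℝ) + 1) * h := by
    intro p hp
    obtain ⟨hy0, hyn⟩ := hsq p hp 1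
    exact lineIdx_facts n m hm hn (p 1) hy0 hyn
  have htbound : ∀ p ∈ S, ∀ j : ℕ, 0 ≤ (if Even j then p 0 else (n:ℝ) - p 0) ∧
      (if Even j then p 0 else (n:ℝ) - p 0) ≤ n := by
    intro p hp j
    obtain ⟨hx0, hxn⟩ := hsq p hp 0
    constructor <;> split <;> linarith
  -- range of κA
  set RA : ℝ := ((m:ℝ)-1)*((n:ℝ)+h) + (n:ℝ) with hRA
  set RB : ℝ := (m:ℝ)*((n:ℝ)+h) + (n:ℝ) with hRB
  have hκArange : ∀ p ∈ S, 0 ≤ κA p ∧ κA p ≤ RA := by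
    intro p hp
    obtain ⟨hj, _, _⟩ := hfacts p hp
    obtain ⟨ht0, htn⟩ := htbound p hp (jA p)
    have hjc : (jA p : ℝ) ≤ (m:ℝ) - 1 := by
      rw [← hmc]; exact_mod_cast hj
    have hj0 : (0:ℝ) ≤ (jA p : ℝ) := Nat.cast_nonneg _
    constructor
    · simp only [hκA]; positivity
    · rw [hRA]; simp only [hκA]
      have hnh : (0:ℝ) ≤ (n:ℝ) + h := by positivity
      nlinarith
  have hκBrange : ∀ p ∈ S, 0 ≤ κB p ∧ κB p ≤ RB := by
    intro p hp
    obtain ⟨hj, _, _⟩ := hfacts p hp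
    obtain ⟨ht0, htn⟩ := htbound p hp (jB p)
    have hjb : jB p ≤ m := by
      simp only [hjB]
      split <;> omega
    have hjc : (jB p : ℝ) ≤ (m:ℝ) := by exact_mod_cast hjb
    have hj0 : (0:ℝ) ≤ (jB p : ℝ) := Nat.cast_nonneg _
    constructor
    · simp only [hκB]; positivity
    · rw [hRB]; simp only [hκB]
      have hnh : (0:ℝ) ≤ (n:ℝ) + h := by positivity
      nlinarith
  have hA : mstLengthF dist S ≤ 2 * (∑ p ∈ S, devA p) - 2 * 0 + RA := by
    apply mst_le_of_key S hS devA κA 0 RA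
    · intro p _; simp only [hdevA]; positivity
    · intro p hp q hq
      obtain ⟨h1, h2⟩ := hκArange p hp
      obtain ⟨h3, h4⟩ := hκArange q hq
      rw [abs_le]; constructor <;> linarith
    · intro p hp q hq
      have := snake_step n h (h/2) hh0.le jA p q (hsq p hp) (hsq q hq)
      simpa [hdevA, hκA] using this
  have hB : mstLengthF dist S ≤ 2 * (∑ p ∈ S, devB p) - 2 * 0 + RB := by
    apply mst_le_of_key S hS devB κB 0 RB
    · intro p _; simp only [hdevB]; positivity
    · intro p hp q hq
      obtain ⟨h1, h2⟩ := hκBrange p hp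
      obtain ⟨h3, h4⟩ := hκBrange q hq
      rw [abs_le]; constructor <;> linarith
    · intro p hp q hq
      have := snake_step n h 0 hh0.le jB p q (hsq p hp) (hsq q hq)
      simpa [hdevB, hκB] using this
  have hpoint : ∀ p ∈ S, devA p + devB p ≤ h/2 := by
    intro p hp
    obtain ⟨hj, hl, hu⟩ := hfacts p hp
    by_cases hc : ((jA p:ℝ)*h + h/2) ≤ p 1
    · have hjBv : jB p = jA p + 1 := by simp only [hjB]; rw [if_pos hc]
      have e1 : devA p = p 1 - ((jA p:ℝ)*h + h/2) := by
        simp only [hdevA]; exact abs_of_nonneg (by linarith)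
      have e2 : devB p = ((jA p:ℝ)+1)*h - p 1 := by
        simp only [hdevB, hjBv]
        push_cast
        rw [abs_of_nonpos (by linarith)]
        ring
      rw [e1, e2]; linarith
    · have hjBv : jB p = jA p := by simp only [hjB]; rw [if_neg hc]
      push_neg at hc
      have e1 : devA p = ((jA p:ℝ)*h + h/2) - p 1 := by
        simp only [hdevA]; rw [abs_of_nonpos (by linarith)]; ring
      have e2 : devB p = p 1 - (jA p:ℝ)*h := by
        simp only [hdevB, hjBv]
        rw [abs_of_nonneg (by linarith)]
        ring
      rw [e1, e2]; linarith
  have hsum : (∑ p ∈ S, devA p) + (∑ p ∈ S, devB p) ≤ (n:ℝ) * (h/2) := by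
    rw [← Finset.sum_add_distrib]
    calc ∑ p ∈ S, (devA p + devB p) ≤ ∑ p ∈ S, (h/2) := Finset.sum_le_sum hpoint
      _ = (S.card : ℝ) * (h/2) := by rw [Finset.sum_const, nsmul_eq_mul]
      _ ≤ (n:ℝ) * (h/2) := by
          have : (S.card : ℝ) ≤ (n:ℝ) := by exact_mod_cast hcard
          nlinarith
  have hRAB : RA + RB = (2*(m:ℝ)-1)*((n:ℝ) + h) + 2*(n:ℝ) := by
    rw [hRA, hRB]; ring
  linarith

lemma sqrt2_lt : Real.sqrt 2 ≤ 1.415 := by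
  rw [show (1.415:ℝ) = Real.sqrt (1.415^2) from (Real.sqrt_sq (by norm_num)).symm]
  exact Real.sqrt_le_sqrt (by norm_num)

lemma sqrt2_gt : 1.414 ≤ Real.sqrt 2 := by
  rw [show (1.414:ℝ) = Real.sqrt (1.414^2) from (Real.sqrt_sq (by norm_num)).symm]
  exact Real.sqrt_le_sqrt (by norm_num)

lemma sqrt5_gt : 2.236 ≤ Real.sqrt 5 := by
  rw [show (2.236:ℝ) = Real.sqrt (2.236^2) from (Real.sqrt_sq (by norm_num)).symm]
  exact Real.sqrt_le_sqrt (by norm_num)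

lemma sqrt5_lt : Real.sqrt 5 ≤ 2.2361 := by
  rw [show (2.2361:ℝ) = Real.sqrt (2.2361^2) from (Real.sqrt_sq (by norm_num)).symm]
  exact Real.sqrt_le_sqrt (by norm_num)

lemma sqrt25 : Real.sqrt 2 ≤ Real.sqrt 5 := Real.sqrt_le_sqrt (by norm_num)

lemma sqrt_half_sq (N : ℝ) (hN : 0 ≤ N) :
    Real.sqrt ((N/2)^2 + (N/2)^2) = (N/2)*Real.sqrt 2 := by
  rw [show (N/2)^2 + (N/2)^2 = (N/2)^2 * 2 by ring, Real.sqrt_mul (sq_nonneg _),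
    Real.sqrt_sq (by positivity)]

lemma sqrt_one_half_sq (N : ℝ) (hN : 0 ≤ N) :
    Real.sqrt (N^2 + (N/2)^2) = (N/2)*Real.sqrt 5 := by
  rw [show N^2 + (N/2)^2 = (N/2)^2 * 5 by ring, Real.sqrt_mul (sq_nonneg _),
    Real.sqrt_sq (by positivity)]

lemma sqrt_half_one_sq (N : ℝ) (hN : 0 ≤ N) :
    Real.sqrt ((N/2)^2 + N^2) = (N/2)*Real.sqrt 5 := by
  rw [show (N/2)^2 + N^2 = (N/2)^2 * 5 by ring, Real.sqrt_mul (sq_nonneg _),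
    Real.sqrt_sq (by positivity)]

lemma sqrt_one_one_sq (N : ℝ) (hN : 0 ≤ N) :
    Real.sqrt (N^2 + N^2) = N*Real.sqrt 2 := by
  rw [show N^2 + N^2 = N^2 * 2 by ring, Real.sqrt_mul (sq_nonneg _),
    Real.sqrt_sq (by positivity)]

lemma quad_bound (n : ℕ) (hn : 1 ≤ n) (S : Finset Pt) (hS : S.Nonempty)
    (hsq : ∀ p ∈ S, ∀ i : Fin 2, p i ∈ Set.Icc (0:ℝ) n) :
    mstLengthF dist S ≤ ((S.card : ℝ) - 1) * ((n:ℝ)/2) * Real.sqrt 2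
      + (3*(n:ℝ)/2) * (Real.sqrt 5 - Real.sqrt 2) := by
  have hnR : (0:ℝ) < n := by exact_mod_cast hn
  set r2 := Real.sqrt 2 with hr2
  set r5 := Real.sqrt 5 with hr5
  have hr20 : 0 ≤ r2 := Real.sqrt_nonneg _
  have hr50 : 0 ≤ r5 := Real.sqrt_nonneg _
  have hr25 : r2 ≤ r5 := sqrt25
  set c2 : ℝ := (n:ℝ)/2*(r5 - r2) with hc2
  have hc20 : 0 ≤ c2 := by rw [hc2]; apply mul_nonneg (by positivity); linarith
  set qidx : Pt → ℕ := fun p => if p 0 ≤ (n:ℝ)/2 then (if p 1 ≤ (n:ℝ)/2 then 0 else 3)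
      else (if p 1 ≤ (n:ℝ)/2 then 1 else 2) with hqidx
  set w : Pt → ℝ := fun _ => (n:ℝ)*r2/4 with hw
  set κ : Pt → ℝ := fun p => (qidx p : ℝ) * c2 with hκ
  have hq3 : ∀ p, qidx p ≤ 3 := by
    intro p; simp only [hqidx]
    split <;> split <;> omega
  have key := mst_le_of_key S hS w κ ((n:ℝ)*r2/4) (3*c2)
    (fun p _ => le_rfl)
    (by
      intro p hp q hq
      simp only [hκ]
      have h1 : (0:ℝ) ≤ (qidx p : ℝ) := Nat.cast_nonneg _
      have h2 : (qidx p : ℝ) ≤ 3 := by exact_mod_cast hq3 p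
      have h3 : (0:ℝ) ≤ (qidx q : ℝ) := Nat.cast_nonneg _
      have h4 : (qidx q : ℝ) ≤ 3 := by exact_mod_cast hq3 q
      rw [abs_le]; constructor <;> nlinarith)
    (by
      intro p hp q hq
      obtain ⟨hpx0, hpxn⟩ := hsq p hp 0
      obtain ⟨hpy0, hpyn⟩ := hsq p hp 1
      obtain ⟨hqx0, hqxn⟩ := hsq q hq 0
      obtain ⟨hqy0, hqyn⟩ := hsq q hq 1
      simp only [hκ, hw]
      have habs : ∀ a b lo hi d : ℝ, lo ≤ a → a ≤ hi → lo ≤ b → b ≤ hi → hi - lo ≤ d →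
          |a - b| ≤ d := by
        intro a b lo hi d h1 h2 h3 h4 h5
        rw [abs_le]; constructor <;> linarith
      have hdHH : |p 0 - q 0| ≤ (n:ℝ)/2 → |p 1 - q 1| ≤ (n:ℝ)/2 → dist p q ≤ (n:ℝ)/2*r2 := by
        intro h1 h2
        have := dist_le_sqrt p q ((n:ℝ)/2) ((n:ℝ)/2) h1 h2
        rwa [sqrt_half_sq _ hnR.le] at this
      have hdFH : |p 1 - q 1| ≤ (n:ℝ)/2 → dist p q ≤ (n:ℝ)/2*r5 := by
        intro h2
        have h1 : |p 0 - q 0| ≤ (n:ℝ) := habs _ _ 0 n _ hpx0 hpxn hqx0 hqxn (by linarith)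
        have := dist_le_sqrt p q ((n:ℝ)) ((n:ℝ)/2) h1 h2
        rwa [sqrt_one_half_sq _ hnR.le] at this
      have hdHF : |p 0 - q 0| ≤ (n:ℝ)/2 → dist p q ≤ (n:ℝ)/2*r5 := by
        intro h1
        have h2 : |p 1 - q 1| ≤ (n:ℝ) := habs _ _ 0 n _ hpy0 hpyn hqy0 hqyn (by linarith)
        have := dist_le_sqrt p q ((n:ℝ)/2) ((n:ℝ)) h1 h2
        rwa [sqrt_half_one_sq _ hnR.le] at this
      have hdFF : dist p q ≤ (n:ℝ)*r2 := by
        have h1 : |p 0 - q 0| ≤ (n:ℝ) := habs _ _ 0 n _ hpx0 hpxn hqx0 hqxn (by linarith)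
        have h2 : |p 1 - q 1| ≤ (n:ℝ) := habs _ _ 0 n _ hpy0 hpyn hqy0 hqyn (by linarith)
        have := dist_le_sqrt p q ((n:ℝ)) ((n:ℝ)) h1 h2
        rwa [sqrt_one_one_sq _ hnR.le] at this
      have h32 : 3/2*r2 ≤ r5 := by
        have h1 : (3/2:ℝ)*r2 = Real.sqrt (9/2) := by
          rw [hr2, show (9/2:ℝ) = (3/2)^2*2 by norm_num, Real.sqrt_mul (by positivity),
            Real.sqrt_sq (by norm_num)]
        rw [h1, hr5]
        exact Real.sqrt_le_sqrt (by norm_num)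
      have hmul32 := mul_le_mul_of_nonneg_left h32 hnR.le
      have hmul25 := mul_le_mul_of_nonneg_left hr25 hnR.le
      by_cases hpx : p 0 ≤ (n:ℝ)/2 <;> by_cases hpy : p 1 ≤ (n:ℝ)/2 <;>
        by_cases hqx : q 0 ≤ (n:ℝ)/2 <;> by_cases hqy : q 1 ≤ (n:ℝ)/2
      · have hvp : qidx p = 0 := by simp [hqidx, hpx, hpy]
        have hvq : qidx q = 0 := by simp [hqidx, hqx, hqy]
        rw [hvp, hvq]
        push_cast
        have hdist := hdHH (habs _ _ 0 ((n:ℝ)/2) _ hpx0 hpx hqx0 hqx (by linarith)) (habs _ _ 0 ((n:ℝ)/2) _ hpy0 hpy hqy0 hqy (by linarith))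
        rw [show ((0:ℝ))*c2 - ((0:ℝ))*c2 = 0 by ring, abs_zero]
        linarith
      · have hvp : qidx p = 0 := by simp [hqidx, hpx, hpy]
        have hvq : qidx q = 3 := by simp [hqidx, hqx, hqy]
        rw [hvp, hvq]
        push_cast
        have hdist := hdHF (habs _ _ 0 ((n:ℝ)/2) _ hpx0 hpx hqx0 hqx (by linarith))
        have habs2 : (3:ℝ)*c2 ≤ |((0:ℝ))*c2 - ((3:ℝ))*c2| := by
          have h1 := le_abs_self (((0:ℝ))*c2 - ((3:ℝ))*c2)
          have h2 := neg_abs_le (((0:ℝ))*c2 - ((3:ℝ))*c2)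
          linarith
        rw [hc2] at habs2 ⊢
        linarith
      · have hvp : qidx p = 0 := by simp [hqidx, hpx, hpy]
        have hvq : qidx q = 1 := by simp [hqidx, hqx, hqy]
        rw [hvp, hvq]
        push_cast
        have hdist := hdFH (habs _ _ 0 ((n:ℝ)/2) _ hpy0 hpy hqy0 hqy (by linarith))
        have habs2 : (1:ℝ)*c2 ≤ |((0:ℝ))*c2 - ((1:ℝ))*c2| := by
          have h1 := le_abs_self (((0:ℝ))*c2 - ((1:ℝ))*c2)
          have h2 := neg_abs_le (((0:ℝ))*c2 - ((1:ℝ))*c2)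
          linarith
        rw [hc2] at habs2 ⊢
        linarith
      · have hvp : qidx p = 0 := by simp [hqidx, hpx, hpy]
        have hvq : qidx q = 2 := by simp [hqidx, hqx, hqy]
        rw [hvp, hvq]
        push_cast
        have hdist := hdFF
        have habs2 : (2:ℝ)*c2 ≤ |((0:ℝ))*c2 - ((2:ℝ))*c2| := by
          have h1 := le_abs_self (((0:ℝ))*c2 - ((2:ℝ))*c2)
          have h2 := neg_abs_le (((0:ℝ))*c2 - ((2:ℝ))*c2)
          linarith
        rw [hc2] at habs2 ⊢
        linarith
      · have hvp : qidx p = 3 := by simp [hqidx, hpx, hpy]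
        have hvq : qidx q = 0 := by simp [hqidx, hqx, hqy]
        rw [hvp, hvq]
        push_cast
        have hdist := hdHF (habs _ _ 0 ((n:ℝ)/2) _ hpx0 hpx hqx0 hqx (by linarith))
        have habs2 : (3:ℝ)*c2 ≤ |((3:ℝ))*c2 - ((0:ℝ))*c2| := by
          have h1 := le_abs_self (((3:ℝ))*c2 - ((0:ℝ))*c2)
          have h2 := neg_abs_le (((3:ℝ))*c2 - ((0:ℝ))*c2)
          linarith
        rw [hc2] at habs2 ⊢
        linarith
      · have hvp : qidx p = 3 := by simp [hqidx, hpx, hpy]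
        have hvq : qidx q = 3 := by simp [hqidx, hqx, hqy]
        rw [hvp, hvq]
        push_cast
        have hdist := hdHH (habs _ _ 0 ((n:ℝ)/2) _ hpx0 hpx hqx0 hqx (by linarith)) (habs _ _ ((n:ℝ)/2) n _ (le_of_lt (not_le.mp hpy)) hpyn (le_of_lt (not_le.mp hqy)) hqyn (by linarith))
        rw [show ((3:ℝ))*c2 - ((3:ℝ))*c2 = 0 by ring, abs_zero]
        linarith
      · have hvp : qidx p = 3 := by simp [hqidx, hpx, hpy]
        have hvq : qidx q = 1 := by simp [hqidx, hqx, hqy]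
        rw [hvp, hvq]
        push_cast
        have hdist := hdFF
        have habs2 : (2:ℝ)*c2 ≤ |((3:ℝ))*c2 - ((1:ℝ))*c2| := by
          have h1 := le_abs_self (((3:ℝ))*c2 - ((1:ℝ))*c2)
          have h2 := neg_abs_le (((3:ℝ))*c2 - ((1:ℝ))*c2)
          linarith
        rw [hc2] at habs2 ⊢
        linarith
      · have hvp : qidx p = 3 := by simp [hqidx, hpx, hpy]
        have hvq : qidx q = 2 := by simp [hqidx, hqx, hqy]
        rw [hvp, hvq]
        push_cast
        have hdist := hdFH (habs _ _ ((n:ℝ)/2) n _ (le_of_lt (not_le.mp hpy)) hpyn (le_of_lt (not_le.mp hqy)) hqyn (by linarith))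
        have habs2 : (1:ℝ)*c2 ≤ |((3:ℝ))*c2 - ((2:ℝ))*c2| := by
          have h1 := le_abs_self (((3:ℝ))*c2 - ((2:ℝ))*c2)
          have h2 := neg_abs_le (((3:ℝ))*c2 - ((2:ℝ))*c2)
          linarith
        rw [hc2] at habs2 ⊢
        linarith
      · have hvp : qidx p = 1 := by simp [hqidx, hpx, hpy]
        have hvq : qidx q = 0 := by simp [hqidx, hqx, hqy]
        rw [hvp, hvq]
        push_cast
        have hdist := hdFH (habs _ _ 0 ((n:ℝ)/2) _ hpy0 hpy hqy0 hqy (by linarith))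
        have habs2 : (1:ℝ)*c2 ≤ |((1:ℝ))*c2 - ((0:ℝ))*c2| := by
          have h1 := le_abs_self (((1:ℝ))*c2 - ((0:ℝ))*c2)
          have h2 := neg_abs_le (((1:ℝ))*c2 - ((0:ℝ))*c2)
          linarith
        rw [hc2] at habs2 ⊢
        linarith
      · have hvp : qidx p = 1 := by simp [hqidx, hpx, hpy]
        have hvq : qidx q = 3 := by simp [hqidx, hqx, hqy]
        rw [hvp, hvq]
        push_cast
        have hdist := hdFF
        have habs2 : (2:ℝ)*c2 ≤ |((1:ℝ))*c2 - ((3:ℝ))*c2| := by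
          have h1 := le_abs_self (((1:ℝ))*c2 - ((3:ℝ))*c2)
          have h2 := neg_abs_le (((1:ℝ))*c2 - ((3:ℝ))*c2)
          linarith
        rw [hc2] at habs2 ⊢
        linarith
      · have hvp : qidx p = 1 := by simp [hqidx, hpx, hpy]
        have hvq : qidx q = 1 := by simp [hqidx, hqx, hqy]
        rw [hvp, hvq]
        push_cast
        have hdist := hdHH (habs _ _ ((n:ℝ)/2) n _ (le_of_lt (not_le.mp hpx)) hpxn (le_of_lt (not_le.mp hqx)) hqxn (by linarith)) (habs _ _ 0 ((n:ℝ)/2) _ hpy0 hpy hqy0 hqy (by linarith))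
        rw [show ((1:ℝ))*c2 - ((1:ℝ))*c2 = 0 by ring, abs_zero]
        linarith
      · have hvp : qidx p = 1 := by simp [hqidx, hpx, hpy]
        have hvq : qidx q = 2 := by simp [hqidx, hqx, hqy]
        rw [hvp, hvq]
        push_cast
        have hdist := hdHF (habs _ _ ((n:ℝ)/2) n _ (le_of_lt (not_le.mp hpx)) hpxn (le_of_lt (not_le.mp hqx)) hqxn (by linarith))
        have habs2 : (1:ℝ)*c2 ≤ |((1:ℝ))*c2 - ((2:ℝ))*c2| := by
          have h1 := le_abs_self (((1:ℝ))*c2 - ((2:ℝ))*c2)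
          have h2 := neg_abs_le (((1:ℝ))*c2 - ((2:ℝ))*c2)
          linarith
        rw [hc2] at habs2 ⊢
        linarith
      · have hvp : qidx p = 2 := by simp [hqidx, hpx, hpy]
        have hvq : qidx q = 0 := by simp [hqidx, hqx, hqy]
        rw [hvp, hvq]
        push_cast
        have hdist := hdFF
        have habs2 : (2:ℝ)*c2 ≤ |((2:ℝ))*c2 - ((0:ℝ))*c2| := by
          have h1 := le_abs_self (((2:ℝ))*c2 - ((0:ℝ))*c2)
          have h2 := neg_abs_le (((2:ℝ))*c2 - ((0:ℝ))*c2)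
          linarith
        rw [hc2] at habs2 ⊢
        linarith
      · have hvp : qidx p = 2 := by simp [hqidx, hpx, hpy]
        have hvq : qidx q = 3 := by simp [hqidx, hqx, hqy]
        rw [hvp, hvq]
        push_cast
        have hdist := hdFH (habs _ _ ((n:ℝ)/2) n _ (le_of_lt (not_le.mp hpy)) hpyn (le_of_lt (not_le.mp hqy)) hqyn (by linarith))
        have habs2 : (1:ℝ)*c2 ≤ |((2:ℝ))*c2 - ((3:ℝ))*c2| := by
          have h1 := le_abs_self (((2:ℝ))*c2 - ((3:ℝ))*c2)
          have h2 := neg_abs_le (((2:ℝ))*c2 - ((3:ℝ))*c2)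
          linarith
        rw [hc2] at habs2 ⊢
        linarith
      · have hvp : qidx p = 2 := by simp [hqidx, hpx, hpy]
        have hvq : qidx q = 1 := by simp [hqidx, hqx, hqy]
        rw [hvp, hvq]
        push_cast
        have hdist := hdHF (habs _ _ ((n:ℝ)/2) n _ (le_of_lt (not_le.mp hpx)) hpxn (le_of_lt (not_le.mp hqx)) hqxn (by linarith))
        have habs2 : (1:ℝ)*c2 ≤ |((2:ℝ))*c2 - ((1:ℝ))*c2| := by
          have h1 := le_abs_self (((2:ℝ))*c2 - ((1:ℝ))*c2)
          have h2 := neg_abs_le (((2:ℝ))*c2 - ((1:ℝ))*c2)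
          linarith
        rw [hc2] at habs2 ⊢
        linarith
      · have hvp : qidx p = 2 := by simp [hqidx, hpx, hpy]
        have hvq : qidx q = 2 := by simp [hqidx, hqx, hqy]
        rw [hvp, hvq]
        push_cast
        have hdist := hdHH (habs _ _ ((n:ℝ)/2) n _ (le_of_lt (not_le.mp hpx)) hpxn (le_of_lt (not_le.mp hqx)) hqxn (by linarith)) (habs _ _ ((n:ℝ)/2) n _ (le_of_lt (not_le.mp hpy)) hpyn (le_of_lt (not_le.mp hqy)) hqyn (by linarith))
        rw [show ((2:ℝ))*c2 - ((2:ℝ))*c2 = 0 by ring, abs_zero]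
        linarith)
  have hsumw : ∑ p ∈ S, w p = (S.card : ℝ) * ((n:ℝ)*r2/4) := by
    simp only [hw]
    rw [Finset.sum_const, nsmul_eq_mul]
  rw [hsumw] at key
  calc mstLengthF dist S ≤ 2 * ((S.card : ℝ) * ((n:ℝ)*r2/4)) - 2*((n:ℝ)*r2/4) + 3*c2 := key
    _ = ((S.card : ℝ) - 1) * ((n:ℝ)/2) * r2 + (3*(n:ℝ)/2) * (r5 - r2) := by
        rw [hc2]; ring

lemma sqrt3_gt : 1.732 ≤ Real.sqrt 3 := by
  rw [show (1.732:ℝ) = Real.sqrt (1.732^2) from (Real.sqrt_sq (by norm_num)).symm]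
  exact Real.sqrt_le_sqrt (by norm_num)

lemma treeWeight_bddBelow (S : Finset Pt) :
    BddBelow {L : ℝ | ∃ G' : SimpleGraph {x // x ∈ S}, G'.IsTree ∧ L = treeWeight dist S G'} := by
  refine ⟨0, ?_⟩
  rintro L ⟨G', _, rfl⟩
  rw [treeWeight]
  apply mul_nonneg (by norm_num)
  apply Finset.sum_nonneg; intro x _
  apply Finset.sum_nonneg; intro y _
  split
  · exact dist_nonneg
  · exact le_refl 0

lemma mst_card_le_one (S : Finset Pt) (h : S.card ≤ 1) : mstLengthF dist S ≤ 0 := by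
  rcases Nat.le_one_iff_eq_zero_or_eq_one.mp h with h0 | h1
  · rw [mstLengthF]
    have hempty : {L : ℝ | ∃ G' : SimpleGraph {x // x ∈ S}, G'.IsTree ∧ L = treeWeight dist S G'} = ∅ := by
      ext L
      simp only [Set.mem_setOf_eq, Set.mem_empty_iff_false, iff_false]
      rintro ⟨G', hT, -⟩
      obtain ⟨⟨x, hx⟩⟩ := hT.isConnected.nonempty
      rw [Finset.card_eq_zero] at h0
      subst h0
      exact absurd hx (Finset.notMem_empty x)
    rw [hempty, Real.sInf_empty]
  · have hsub : ∀ a b : {x // x ∈ S}, a = b := by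
      rw [Finset.card_eq_one] at h1
      obtain ⟨a, rfl⟩ := h1
      rintro ⟨x, hx⟩ ⟨y, hy⟩
      simp only [Finset.mem_singleton] at hx hy
      subst hx; subst hy; rfl
    have hne : Nonempty {x // x ∈ S} := by
      have : 0 < S.card := by omega
      obtain ⟨a, ha⟩ := Finset.card_pos.mp this
      exact ⟨⟨a, ha⟩⟩
    have htree : (⊥ : SimpleGraph {x // x ∈ S}).IsTree := by
      constructor
      · rw [SimpleGraph.connected_iff]
        refine ⟨fun a b => ?_, hne⟩
        rw [hsub a b]
      · exact SimpleGraph.isAcyclic_bot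
    have hweight : treeWeight dist S (⊥ : SimpleGraph {x // x ∈ S}) = 0 := by
      rw [treeWeight]
      simp
    rw [mstLengthF]
    exact csInf_le (treeWeight_bddBelow S) ⟨⊥, htree, hweight.symm⟩

lemma num_6_32 (n : ℕ) (h6 : 6 ≤ n) (h32 : n ≤ 32) :
    (n:ℝ)*((n:ℝ)/2)/2 + ((2*2-1)*((n:ℝ) + (n:ℝ)/2) + 2*(n:ℝ))/2 ≤ 2*(n:ℝ)*Real.sqrt n := by
  set s := Real.sqrt n with hsdef
  have hs : s^2 = (n:ℝ) := Real.sq_sqrt (Nat.cast_nonneg n)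
  have hs0 : 0 ≤ s := Real.sqrt_nonneg _
  have h6R : (6:ℝ) ≤ (n:ℝ) := by exact_mod_cast h6
  have h32R : (n:ℝ) ≤ 32 := by exact_mod_cast h32
  have hsl : 12/5 ≤ s := by nlinarith
  have hsu : s ≤ 17/3 := by nlinarith
  rw [← hs]
  nlinarith [mul_nonneg (mul_nonneg (sub_nonneg.mpr hsl) (sub_nonneg.mpr hsu)) (sq_nonneg s),
    mul_nonneg (sub_nonneg.mpr hsu) (sq_nonneg s), sq_nonneg s]

lemma num_33 (n : ℕ) (h33 : 33 ≤ n) :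
    (n:ℝ)*((n:ℝ)/((Nat.sqrt (n/2) + 1 : ℕ):ℝ))/2 +
      ((2*((Nat.sqrt (n/2) + 1 : ℕ):ℝ)-1)*((n:ℝ) + (n:ℝ)/((Nat.sqrt (n/2) + 1 : ℕ):ℝ)) + 2*(n:ℝ))/2
      ≤ 2*(n:ℝ)*Real.sqrt n := by
  set a := Nat.sqrt (n/2) with hadef
  set M : ℝ := ((a + 1 : ℕ):ℝ) with hMdef
  have hMa : M = (a:ℝ) + 1 := by rw [hMdef]; push_cast; ring
  have hMpos : (0:ℝ) < M := by rw [hMa]; positivity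
  have hM1 : (1:ℝ) ≤ M := by rw [hMa]; have : (0:ℝ) ≤ (a:ℝ) := Nat.cast_nonneg _; linarith
  set s := Real.sqrt n with hsdef
  have hs : s^2 = (n:ℝ) := Real.sq_sqrt (Nat.cast_nonneg n)
  have hs0 : 0 ≤ s := Real.sqrt_nonneg _
  have h33R : (33:ℝ) ≤ (n:ℝ) := by exact_mod_cast h33
  have hs57 : 57/10 ≤ s := by nlinarith
  -- a^2 ≤ n/2
  have haa : (a:ℝ)^2 ≤ (n:ℝ)/2 := by
    have h1 : a^2 ≤ n/2 := Nat.sqrt_le' (n/2)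
    have h2 : ((a^2 : ℕ):ℝ) ≤ ((n/2 : ℕ):ℝ) := by exact_mod_cast h1
    have h3 : ((n/2 : ℕ):ℝ) ≤ (n:ℝ)/2 := Nat.cast_div_le
    push_cast at h2
    linarith
  have hM2 : (n:ℝ) + 1 ≤ 2*M^2 := by
    have h1 : n/2 < (a + 1)^2 := Nat.lt_succ_sqrt' (n/2)
    have h2 : n/2 + 1 ≤ (a+1)^2 := h1
    have h3 : n ≤ 2*(n/2) + 1 := by omega
    have h4 : n + 1 ≤ 2*(a+1)^2 := by omega
    have h5 : ((n + 1 : ℕ):ℝ) ≤ ((2*(a+1)^2 : ℕ):ℝ) := by exact_mod_cast h4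
    push_cast at h5
    rw [hMa]
    push_cast
    linarith
  have h7 : 7*s ≤ 10*M := by
    nlinarith [hM2, hs, hMpos, hs0]
  have key : s^2 + 2*M^2 + 3*M - 1 ≤ 4*s*M := by
    have h1 : 2*M^2 ≤ s^2 + 4*M - 2 := by
      have : (M - 1)^2 ≤ (n:ℝ)/2 := by rw [hMa]; simpa using haa
      nlinarith [hs]
    have h47 : (0:ℝ) ≤ 4*s - 7 := by linarith
    have h2 : (7*s/10)*(4*s-7) ≤ M*(4*s-7) := mul_le_mul_of_nonneg_right (by linarith) h47
    nlinarith [sq_nonneg (s - 57/10)]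
  have hexp : (n:ℝ)*((n:ℝ)/M)/2 + ((2*M-1)*((n:ℝ) + (n:ℝ)/M) + 2*(n:ℝ))/2
      = ((n:ℝ)^2 + (2*M-1)*((n:ℝ)*M + (n:ℝ)) + 2*(n:ℝ)*M)/(2*M) := by
    field_simp
    ring
  rw [hexp, div_le_iff₀ (by positivity)]
  rw [← hs]
  nlinarith [mul_le_mul_of_nonneg_left key (sq_nonneg s)]

lemma num_quad (n k : ℕ) (h2 : 2 ≤ n) (h5 : n ≤ 5) (hk : k ≤ n) :
    ((k:ℝ) - 1) * ((n:ℝ)/2) * Real.sqrt 2 + (3*(n:ℝ)/2)*(Real.sqrt 5 - Real.sqrt 2)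
      ≤ 2*(n:ℝ)*Real.sqrt n := by
  have hkR : (k:ℝ) ≤ (n:ℝ) := by exact_mod_cast hk
  have h1 : ((k:ℝ) - 1) * ((n:ℝ)/2) * Real.sqrt 2 ≤ ((n:ℝ) - 1) * ((n:ℝ)/2) * Real.sqrt 2 := by
    apply mul_le_mul_of_nonneg_right _ (Real.sqrt_nonneg _)
    apply mul_le_mul_of_nonneg_right _ (by positivity)
    linarith
  have h2' : ((n:ℝ) - 1) * ((n:ℝ)/2) * Real.sqrt 2 + (3*(n:ℝ)/2)*(Real.sqrt 5 - Real.sqrt 2)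
      ≤ 2*(n:ℝ)*Real.sqrt n := by
    clear h1 hkR hk
    interval_cases n
    · norm_num
      nlinarith [sqrt2_gt, sqrt5_lt, sqrt2_lt, sqrt5_gt]
    · norm_num
      nlinarith [sqrt2_gt, sqrt5_lt, sqrt2_lt, sqrt5_gt, sqrt3_gt]
    · have h4 : Real.sqrt 4 = 2 := by
        rw [show (4:ℝ) = 2^2 by norm_num, Real.sqrt_sq (by norm_num)]
      norm_num [h4]
      nlinarith [sqrt2_gt, sqrt5_lt, sqrt2_lt, sqrt5_gt]
    · norm_num
      nlinarith [sqrt2_gt, sqrt5_lt, sqrt2_lt, sqrt5_gt]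
  linarith

/-- The minimum spanning tree of any `n` or fewer points in the square `[0,n]²` has length
at most `2n√n`. -/
theorem mst_in_square_upper_bound (n : ℕ) (hn : 0 < n) (S : Set Pt) (hS : S.Finite)
    (hcard : S.ncard ≤ n) (hsq : ∀ p ∈ S, ∀ i : Fin 2, p i ∈ Set.Icc (0 : ℝ) n) :
    mstLength dist S ≤ 2 * n * Real.sqrt n := by
  have hrhs : (0:ℝ) ≤ 2*(n:ℝ)*Real.sqrt n := by positivity
  rw [mstLength, dif_pos hS]
  set F := hS.toFinset with hFdef
  have hFcard : F.card = S.ncard := by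
    rw [Set.ncard_eq_toFinset_card S hS]
  have hFsq : ∀ p ∈ F, ∀ i : Fin 2, p i ∈ Set.Icc (0:ℝ) n := by
    intro p hp
    exact hsq p ((Set.Finite.mem_toFinset hS).mp hp)
  rcases le_or_gt F.card 1 with h1 | h1
  · exact le_trans (mst_card_le_one F h1) hrhs
  · have hFne : F.Nonempty := Finset.card_pos.mp (by omega)
    have hcard' : F.card ≤ n := by rw [hFcard]; exact hcard
    have hn2 : 2 ≤ n := by omega
    rcases le_or_gt n 5 with h5 | h5
    · have hq := quad_bound n (by omega) F hFne hFsq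
      have hnum := num_quad n F.card (by omega) h5 hcard'
      linarith
    · rcases le_or_gt n 32 with h32 | h32
      · have hsb := snake_bound n 2 (by norm_num) (by omega) F hFne hcard' hFsq
        have hnum := num_6_32 n (by omega) h32
        push_cast at hsb
        linarith
      · have hsb := snake_bound n (Nat.sqrt (n/2) + 1) (by omega) (by omega) F hFne hcard' hFsq
        have hnum := num_33 n (by omega)
        linarith
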